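/- In the regularised RBM construction, flipping a single hidden spin h_α in the pattern ξ^η = (v^η, h^η) with h^η_α = 2δ_{αη}-1 increases the energy by ΔE = 4A|S_{αη} - V + λ_α| > 3A. -/
import Mathlib


open Finset

/-- Energy of the regularised RBM with weights `W j α = 2 A v α j`, zero visible
biases and hidden biases `c α = 2 A (λ α - V)`. -/
noncomputable def raEnergy {V H : ℕ} (A : ℝ) (lam : Fin H → ℝ)
    (v : Fin H → Fin V → ℝ) (x : Fin V → ℝ) (h : Fin H → ℝ) : ℝ :=
  -(∑ j, ∑ α, x j * (2 * A * v α j) * h α)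
    - ∑ α, (2 * A * (lam α - (V : ℝ))) * h α

/-- Overlap `S α η = v^α · v^η`. -/
noncomputable def raOverlap {V H : ℕ} (v : Fin H → Fin V → ℝ) (α η : Fin H) : ℝ :=
  ∑ j, v α j * v η j

lemma raOverlap_self {V H : ℕ} (v : Fin H → Fin V → ℝ)
    (hpm : ∀ η j, v η j = 1 ∨ v η j = -1) (η : Fin H) :
    raOverlap v η η = V := by
  unfold raOverlap
  have h : ∀ j, v η j * v η j = 1 := by
    intro j; rcases hpm η j with h | h <;> rw [h] <;> norm_num
  simp [h]

lemma raOverlap_le {V H : ℕ} (v : Fin H → Fin V → ℝ)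
    (hpm : ∀ η j, v η j = 1 ∨ v η j = -1)
    {α η : Fin H} (hne : v α ≠ v η) :
    raOverlap v α η ≤ (V : ℝ) - 2 := by
  obtain ⟨j0, hj0⟩ : ∃ j, v α j ≠ v η j := by
    by_contra h; push_neg at h; exact hne (funext h)
  have hterm : ∀ j, v α j * v η j ≤ 1 := by
    intro j; rcases hpm α j with h1 | h1 <;> rcases hpm η j with h2 | h2 <;>
      rw [h1, h2] <;> norm_num
  have hj0' : v α j0 * v η j0 = -1 := by
    rcases hpm α j0 with h1 | h1 <;> rcases hpm η j0 with h2 | h2 <;>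
      rw [h1, h2] <;> simp_all
  have hV : 1 ≤ V := j0.pos
  unfold raOverlap
  rw [← Finset.add_sum_erase _ _ (Finset.mem_univ j0), hj0']
  have hbound : ∑ j ∈ Finset.univ.erase j0, v α j * v η j ≤ ((V : ℝ) - 1) := by
    calc ∑ j ∈ Finset.univ.erase j0, v α j * v η j
        ≤ ∑ _j ∈ Finset.univ.erase j0, (1 : ℝ) :=
          Finset.sum_le_sum fun j _ => hterm j
      _ = ((Finset.univ.erase j0).card : ℝ) := by simp
      _ = (V : ℝ) - 1 := by
          rw [Finset.card_erase_of_mem (Finset.mem_univ j0)]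
          rw [Nat.cast_sub (by simpa using hV)]
          simp
  linarith

lemma sum_mul_update {H : ℕ} (g h : Fin H → ℝ) (α : Fin H) (a : ℝ) :
    ∑ β, g β * Function.update h α a β
      = (∑ β, g β * h β) + g α * (a - h α) := by
  have key : ∀ β, g β * Function.update h α a β
      = g β * h β + (if β = α then g α * (a - h α) else 0) := by
    intro β
    by_cases hb : β = α
    · subst hb; simp [Function.update_self]; ring
    · simp [Function.update_of_ne hb, hb]
  rw [Finset.sum_congr rfl fun β _ => key β, Finset.sum_add_distrib]
  simp

lemma raEnergy_eq {V H : ℕ} (A : ℝ) (lam : Fin H → ℝ)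
    (v : Fin H → Fin V → ℝ) (x : Fin V → ℝ) (h : Fin H → ℝ) :
    raEnergy A lam v x h
      = -∑ β, ((∑ j, x j * (2 * A * v β j)) + 2 * A * (lam β - (V : ℝ))) * h β := by
  unfold raEnergy
  rw [Finset.sum_comm]
  have key : ∀ β : Fin H, ((∑ j, x j * (2 * A * v β j)) + 2 * A * (lam β - (V : ℝ))) * h β
      = (∑ j, x j * (2 * A * v β j) * h β) + 2 * A * (lam β - (V : ℝ)) * h β := by
    intro β; rw [add_mul, Finset.sum_mul]
  simp_rw [key]
  rw [Finset.sum_add_distrib]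
  ring

theorem regularised_hidden_flip_energy_cost
    (V H : ℕ) (A : ℝ) (hA : 0 < A) (lam : Fin H → ℝ)
    (hlam : ∀ α, 3 / 4 < lam α ∧ lam α < 5 / 4)
    (v : Fin H → Fin V → ℝ)
    (hpm : ∀ η j, v η j = 1 ∨ v η j = -1)
    (hdist : Function.Injective v)
    (hneg : ∀ η, ∃ η', ∀ j, v η' j = -(v η j))
    (η α : Fin H) :
    let hpat : Fin H → ℝ := fun β => if β = η then 1 else -1
    raEnergy A lam v (v η) (Function.update hpat α (-(hpat α)))
        - raEnergy A lam v (v η) hpat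
      = 4 * A * |raOverlap v α η - (V : ℝ) + lam α| ∧
    4 * A * |raOverlap v α η - (V : ℝ) + lam α| > 3 * A := by
  intro hpat
  set g : Fin H → ℝ :=
    fun β => (∑ j, v η j * (2 * A * v β j)) + 2 * A * (lam β - (V : ℝ)) with hg
  have hdiff : raEnergy A lam v (v η) (Function.update hpat α (-(hpat α)))
      - raEnergy A lam v (v η) hpat = 2 * g α * hpat α := by
    rw [raEnergy_eq, raEnergy_eq, sum_mul_update]
    ring
  have hgα : g α = 2 * A * (raOverlap v α η + lam α - (V : ℝ)) := by
    show (∑ j, v η j * (2 * A * v α j)) + 2 * A * (lam α - (V : ℝ))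
      = 2 * A * (raOverlap v α η + lam α - (V : ℝ))
    unfold raOverlap
    have e : ∑ j, v η j * (2 * A * v α j) = 2 * A * ∑ j, v α j * v η j := by
      rw [Finset.mul_sum]
      exact Finset.sum_congr rfl fun j _ => by ring
    rw [e]; ring
  obtain ⟨hl1, hl2⟩ := hlam α
  by_cases hcase : α = η
  · subst hcase
    have hS : raOverlap v α α = V := raOverlap_self v hpm α
    have habs : |raOverlap v α α - (V : ℝ) + lam α| = lam α := by
      rw [hS]; rw [show (V : ℝ) - (V : ℝ) + lam α = lam α by ring]
      exact abs_of_pos (by linarith)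
    constructor
    · rw [hdiff, hgα, habs, hS]
      simp only [hpat, if_pos rfl]
      ring
    · rw [habs]; nlinarith
  · have hne : v α ≠ v η := fun h => hcase (hdist h)
    have hS : raOverlap v α η ≤ (V : ℝ) - 2 := raOverlap_le v hpm hne
    have hneg' : raOverlap v α η - (V : ℝ) + lam α < 0 := by linarith
    have habs : |raOverlap v α η - (V : ℝ) + lam α|
        = -(raOverlap v α η - (V : ℝ) + lam α) := abs_of_neg hneg'
    constructor
    · rw [hdiff, hgα, habs]
      simp only [hpat, if_neg hcase]
      ring
    · rw [habs]; nlinarith
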